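/- arXiv:1501.00014 — 7 statements merged into one kernel-verified Lean document; each statement's English description precedes it below -/
import Mathlib

section
/- Let x = (x_1,...,x_N) be positive reals with integer sum M, let q ≥ 1, and let m* be a vector of nonnegative integers with ∑ m*_i = M minimizing ∑_i |x_i - m_i|^q over all nonnegative integer vectors m with ∑ m_i = M. Then for every i, m*_i ∈ {floor(x_i), ceil(x_i)}. -/
lemma key_rpow {q : ℝ} (hq : 1 ≤ q) {a : ℝ} (ha : 0 ≤ a) : a ^ q + 1 ≤ (a + 1) ^ q := by
  have h := NNReal.add_rpow_le_rpow_add (a.toNNReal) 1 hq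
  have h2 := (NNReal.coe_le_coe.2 h)
  push_cast [NNReal.coe_rpow, Real.coe_toNNReal a ha] at h2
  simpa using h2

/-- t^q ≤ t for 0 ≤ t ≤ 1, q ≥ 1 -/
lemma small_rpow {q : ℝ} (hq : 1 ≤ q) {t : ℝ} (ht0 : 0 ≤ t) (ht1 : t ≤ 1) : t ^ q ≤ t := by
  rcases eq_or_lt_of_le ht0 with h | h
  · rw [← h, Real.zero_rpow (by linarith)]
  · calc t ^ q ≤ t ^ (1:ℝ) := Real.rpow_le_rpow_of_exponent_ge h ht1 hq
    _ = t := Real.rpow_one t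

lemma swap_lt {q : ℝ} (hq : 1 ≤ q) {di dj : ℝ} (h1 : 1 ≤ di) (h3 : 0 < dj) :
    (di - 1) ^ q + |dj - 1| ^ q < di ^ q + dj ^ q := by
  have hkey : (di - 1) ^ q + 1 ≤ di ^ q := by
    have := key_rpow hq (a := di - 1) (by linarith)
    simpa using this
  have hj : |dj - 1| ^ q < dj ^ q + 1 := by
    rcases le_or_gt dj 1 with h | h
    · have : |dj - 1| = 1 - dj := by rw [abs_of_nonpos (by linarith)]; ring
      rw [this]
      have h2 : (1 - dj) ^ q ≤ 1 - dj := small_rpow hq (by linarith) (by linarith)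
      have h4 : 0 ≤ dj ^ q := Real.rpow_nonneg h3.le q
      linarith
    · have : |dj - 1| = dj - 1 := abs_of_nonneg (by linarith)
      rw [this]
      have h2 : (dj - 1) ^ q < dj ^ q :=
        Real.rpow_lt_rpow (by linarith) (by linarith) (by linarith)
      linarith
  linarith

lemma sum_split {N : ℕ} {α : Type*} [AddCommMonoid α] (f : Fin N → α) {i j : Fin N}
    (hij : i ≠ j) : ∑ k, f k = f i + f j + ∑ k ∈ (Finset.univ.erase i).erase j, f k := by
  rw [← Finset.sum_erase_add _ _ (Finset.mem_univ i),
    ← Finset.sum_erase_add _ _ (Finset.mem_erase.2 ⟨Ne.symm hij, Finset.mem_univ j⟩)]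
  abel

theorem stmt1 (N : ℕ) (hN : 1 ≤ N) (x : Fin N → ℝ) (hx : ∀ i, 0 < x i)
    (M : ℕ) (hsum : ∑ i, x i = (M : ℝ)) (q : ℝ) (hq : 1 ≤ q)
    (mstar : Fin N → ℕ) (hms : ∑ i, mstar i = M)
    (hmin : ∀ m : Fin N → ℕ, ∑ i, m i = M →
      ∑ i, |x i - (mstar i : ℝ)| ^ q ≤ ∑ i, |x i - (m i : ℝ)| ^ q) :
    ∀ i, (mstar i : ℤ) = ⌊x i⌋ ∨ (mstar i : ℤ) = ⌈x i⌉ := by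
  intro i
  by_contra hcon
  push_neg at hcon
  obtain ⟨hfl, hce⟩ := hcon
  have hcf := Int.ceil_le_floor_add_one (x i)
  -- generic contradiction machinery
  have hcontra : ∀ (j : Fin N) (m : Fin N → ℕ), j ≠ i → (∀ k, k ≠ i → k ≠ j → m k = mstar k) →
      m i + m j = mstar i + mstar j →
      |x i - (m i : ℝ)| ^ q + |x j - (m j : ℝ)| ^ q
        < |x i - (mstar i : ℝ)| ^ q + |x j - (mstar j : ℝ)| ^ q → False := by
    intro j m hji hoff hsum2 hlt
    have hij : i ≠ j := Ne.symm hji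
    have hmM : ∑ k, m k = M := by
      rw [sum_split m hij, sum_split mstar hij] at *
      rw [← hms]
      have : ∑ k ∈ (Finset.univ.erase i).erase j, m k
          = ∑ k ∈ (Finset.univ.erase i).erase j, mstar k := by
        apply Finset.sum_congr rfl
        intro k hk
        simp only [Finset.mem_erase] at hk
        exact hoff k hk.2.1 hk.1
      omega
    have h := hmin m hmM
    rw [sum_split (fun k => |x k - (m k : ℝ)| ^ q) hij,
        sum_split (fun k => |x k - (mstar k : ℝ)| ^ q) hij] at h
    have : ∑ k ∈ (Finset.univ.erase i).erase j, |x k - (m k : ℝ)| ^ q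
        = ∑ k ∈ (Finset.univ.erase i).erase j, |x k - (mstar k : ℝ)| ^ q := by
      apply Finset.sum_congr rfl
      intro k hk
      simp only [Finset.mem_erase] at hk
      rw [hoff k hk.2.1 hk.1]
    rw [this] at h

    linarith
  rcases le_or_gt (mstar i : ℤ) ⌊x i⌋ with hle | hgt
  · -- mstar i < ⌊x i⌋, too small: x i - mstar i ≥ 1
    have hsmall : (mstar i : ℤ) + 1 ≤ ⌊x i⌋ := by omega
    have hdi : 1 ≤ x i - (mstar i : ℝ) := by
      have := Int.floor_le (x i)
      have h2 : ((mstar i : ℤ) : ℝ) + 1 ≤ (⌊x i⌋ : ℝ) := by exact_mod_cast hsmall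
      push_cast at h2 ⊢
      linarith
    -- find j with mstar j > x j
    have hex : ∃ j, (x j : ℝ) < (mstar j : ℝ) := by
      by_contra hall
      push_neg at hall
      have : ∑ k, (mstar k : ℝ) < ∑ k, x k := by
        apply Finset.sum_lt_sum (fun k _ => hall k) ⟨i, Finset.mem_univ i, by linarith⟩
      rw [hsum] at this
      push_cast [← hms] at this
      linarith
    obtain ⟨j, hj⟩ := hex
    have hji : j ≠ i := by
      intro h; rw [h] at hj; linarith
    have hj1 : 1 ≤ mstar j := by
      by_contra h
      have : mstar j = 0 := by omega
      rw [this] at hj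
      simpa using (hx j).trans hj
    set m : Fin N → ℕ := Function.update (Function.update mstar i (mstar i + 1)) j (mstar j - 1) with hm
    have hmi : m i = mstar i + 1 := by
      simp [hm, Function.update, Ne.symm hji]
    have hmj : m j = mstar j - 1 := by simp [hm, Function.update]
    apply hcontra j m hji
    · intro k hki hkj; simp [hm, Function.update, hki, hkj]
    · rw [hmi, hmj]; omega
    · rw [hmi, hmj]
      have hci : |x i - ((mstar i + 1 : ℕ) : ℝ)| = (x i - mstar i) - 1 := by
        push_cast
        rw [abs_of_nonneg (by linarith)]
        ring
      have hcj : |x j - ((mstar j - 1 : ℕ) : ℝ)| = |((mstar j : ℝ) - x j) - 1| := by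
        rw [Nat.cast_sub hj1]
        push_cast
        rw [← abs_neg]
        ring_nf
      have hfi : |x i - (mstar i : ℝ)| = x i - mstar i := abs_of_nonneg (by linarith)
      have hfj : |x j - (mstar j : ℝ)| = (mstar j : ℝ) - x j := by
        rw [abs_of_nonpos (by linarith)]; ring
      rw [hci, hcj, hfi, hfj]
      exact swap_lt hq hdi (by linarith)
  · -- mstar i > ⌈x i⌉, too big
    have hbig : ⌈x i⌉ + 1 ≤ (mstar i : ℤ) := by omega
    have hdi : 1 ≤ (mstar i : ℝ) - x i := by
      have := Int.le_ceil (x i)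
      have h2 : (⌈x i⌉ : ℝ) + 1 ≤ ((mstar i : ℤ) : ℝ) := by exact_mod_cast hbig
      push_cast at h2 ⊢
      linarith
    have hi1 : 1 ≤ mstar i := by
      by_contra h
      have : mstar i = 0 := by omega
      rw [this] at hdi
      have := hx i
      simp at hdi
      linarith
    have hex : ∃ j, (mstar j : ℝ) < x j := by
      by_contra hall
      push_neg at hall
      have : ∑ k, (x k : ℝ) < ∑ k, (mstar k : ℝ) := by
        apply Finset.sum_lt_sum (fun k _ => hall k) ⟨i, Finset.mem_univ i, by linarith⟩
      rw [hsum] at this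
      push_cast [← hms] at this
      linarith
    obtain ⟨j, hj⟩ := hex
    have hji : j ≠ i := by
      intro h; rw [h] at hj; linarith
    set m : Fin N → ℕ := Function.update (Function.update mstar i (mstar i - 1)) j (mstar j + 1) with hm
    have hmi : m i = mstar i - 1 := by
      simp [hm, Function.update, Ne.symm hji]
    have hmj : m j = mstar j + 1 := by simp [hm, Function.update]
    apply hcontra j m hji
    · intro k hki hkj; simp [hm, Function.update, hki, hkj]
    · rw [hmi, hmj]; omega
    · rw [hmi, hmj]
      have hci : |x i - ((mstar i - 1 : ℕ) : ℝ)| = ((mstar i : ℝ) - x i) - 1 := by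
        rw [Nat.cast_sub hi1]
        push_cast
        rw [← abs_neg, abs_of_nonneg (by linarith)]
        ring
      have hcj : |x j - ((mstar j + 1 : ℕ) : ℝ)| = |(x j - (mstar j : ℝ)) - 1| := by
        push_cast
        ring_nf
      have hfi : |x i - (mstar i : ℝ)| = (mstar i : ℝ) - x i := by
        rw [abs_of_nonpos (by linarith)]; ring
      have hfj : |x j - (mstar j : ℝ)| = x j - (mstar j : ℝ) := abs_of_nonneg (by linarith)
      rw [hci, hcj, hfi, hfj]
      have := swap_lt hq hdi (dj := x j - (mstar j : ℝ)) (by linarith)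
      linarith
end

section
/- Let x be a positive real vector with integer sum M, and suppose m_i < floor(x_i) for some i and m_j > ceil(x_j) for some j ≠ i, where m is a nonnegative integer vector with sum M. Define y by y_i = m_i + 1, y_j = m_j - 1, and y_k = m_k otherwise. Then ∑ y_k = M and for every q ≥ 1, ∑_k |x_k - y_k|^q < ∑_k |x_k - m_k|^q. -/
theorem stmt3 (N : ℕ) (hN : 2 ≤ N) (x : Fin N → ℝ) (hx : ∀ k, 0 < x k)
    (M : ℕ) (hsum : ∑ k, x k = (M : ℝ)) (m : Fin N → ℕ) (hm : ∑ k, m k = M)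
    (i j : Fin N) (hij : i ≠ j)
    (hi : (m i : ℤ) < ⌊x i⌋) (hj : (m j : ℤ) > ⌈x j⌉)
    (y : Fin N → ℕ)
    (hy : y = Function.update (Function.update m i (m i + 1)) j (m j - 1)) :
    ∑ k, y k = M ∧
      ∀ q : ℝ, 1 ≤ q →
        ∑ k, |x k - (y k : ℝ)| ^ q < ∑ k, |x k - (m k : ℝ)| ^ q := by
  have hcj : (1 : ℤ) ≤ ⌈x j⌉ := Int.ceil_pos.mpr (hx j)
  have hmj2 : 2 ≤ m j := by
    have : (2 : ℤ) ≤ (m j : ℤ) := by omega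
    exact_mod_cast this
  have hyi : y i = m i + 1 := by
    rw [hy, Function.update_of_ne hij, Function.update_self]
  have hyj : y j = m j - 1 := by
    rw [hy, Function.update_self]
  have hyk : ∀ k, k ≠ i → k ≠ j → y k = m k := by
    intro k hki hkj
    rw [hy, Function.update_of_ne hkj, Function.update_of_ne hki]
  -- real cast facts
  have hyjR : ((y j : ℕ) : ℝ) = (m j : ℝ) - 1 := by
    rw [hyj]; push_cast [Nat.cast_sub (by omega : 1 ≤ m j)]; ring
  have hxi : (m i : ℝ) + 1 ≤ x i := by
    have h1 : (m i : ℤ) + 1 ≤ ⌊x i⌋ := by omega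
    have := (Int.le_floor).mp h1
    push_cast at this; linarith
  have hxj : x j ≤ (m j : ℝ) - 1 := by
    have h1 : ⌈x j⌉ ≤ (m j : ℤ) - 1 := by omega
    have := Int.ceil_le.mp h1
    push_cast at this; linarith
  constructor
  · have e1 : ∑ k, y k = (m j - 1) + ∑ k ∈ Finset.univ.erase j,
        Function.update m i (m i + 1) k := by
      rw [hy, Finset.sum_update_of_mem (Finset.mem_univ j)]; simp [Finset.erase_eq]
    have hij' : i ∈ Finset.univ.erase j := Finset.mem_erase.mpr ⟨hij, Finset.mem_univ i⟩
    have e2 : ∑ k ∈ Finset.univ.erase j, Function.update m i (m i + 1) k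
        = (m i + 1) + ∑ k ∈ (Finset.univ.erase j).erase i, m k := by
      rw [Finset.sum_update_of_mem hij']; simp [Finset.erase_eq]
    have e3 : ∑ k, m k = m j + (m i + ∑ k ∈ (Finset.univ.erase j).erase i, m k) := by
      rw [← Finset.add_sum_erase _ _ (Finset.mem_univ j), ← Finset.add_sum_erase _ _ hij']
    rw [e1, e2]
    omega
  · intro q hq
    have hq0 : 0 < q := lt_of_lt_of_le one_pos hq
    apply Finset.sum_lt_sum
    · intro k _
      rcases eq_or_ne k i with rfl | hki
      · apply le_of_lt
        apply Real.rpow_lt_rpow (abs_nonneg _) _ hq0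
        rw [hyi]
        push_cast
        rw [abs_of_nonneg (by linarith), abs_of_nonneg (by linarith)]
        linarith
      rcases eq_or_ne k j with rfl | hkj
      · apply le_of_lt
        apply Real.rpow_lt_rpow (abs_nonneg _) _ hq0
        rw [hyjR]
        rw [abs_of_nonpos (by linarith), abs_of_nonpos (by linarith)]
        linarith
      · rw [hyk k hki hkj]
    · refine ⟨i, Finset.mem_univ i, ?_⟩
      apply Real.rpow_lt_rpow (abs_nonneg _) _ hq0
      rw [hyi]
      push_cast
      rw [abs_of_nonneg (by linarith), abs_of_nonneg (by linarith)]
      linarith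
end

section
/- Let x be a positive real vector with integer sum M whose fractional parts are nonincreasing, let I = M - ∑ floor(x_i), and let m* round up the first I components and round down the rest. Then for any nonnegative integer vector m with ∑ m_i = M and m_i ∈ {floor(x_i), ceil(x_i)} for all i, and for any q ≥ 1, we have ∑_i |x_i - m*_i|^q ≤ ∑_i |x_i - m_i|^q. -/
open Finset

theorem stmt8 (N : ℕ) (hN : 1 ≤ N) (x : Fin N → ℝ) (hx : ∀ i, 0 < x i)
    (M : ℕ) (hsum : ∑ i, x i = (M : ℝ))
    (hsort : ∀ i j : Fin N, i ≤ j → x j - ⌊x j⌋ ≤ x i - ⌊x i⌋)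
    (I : ℕ) (hI : (I : ℤ) = (M : ℤ) - ∑ i, ⌊x i⌋)
    (mstar : Fin N → ℕ)
    (hms : ∀ i : Fin N,
      mstar i = if (i : ℕ) < I then (⌈x i⌉).toNat else (⌊x i⌋).toNat)
    (q : ℝ) (hq : 1 ≤ q)
    (m : Fin N → ℕ) (hm : ∑ i, m i = M)
    (hfeas : ∀ i, (m i : ℤ) = ⌊x i⌋ ∨ (m i : ℤ) = ⌈x i⌉) :
    ∑ i, |x i - (mstar i : ℝ)| ^ q ≤ ∑ i, |x i - (m i : ℝ)| ^ q := by
  classical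
  have hq0 : (0:ℝ) ≤ q := le_trans zero_le_one hq
  have hqne : q ≠ 0 := by positivity
  set f : Fin N → ℝ := fun i => Int.fract (x i) with hfdef
  have hf0 : ∀ i, 0 ≤ f i := fun i => Int.fract_nonneg _
  have hf1 : ∀ i, f i < 1 := fun i => Int.fract_lt_one _
  have hfeq : ∀ i, f i = x i - ⌊x i⌋ := fun i => (Int.self_sub_floor (x i)).symm
  have hfsort : ∀ i j : Fin N, i ≤ j → f j ≤ f i := by
    intro i j h
    rw [hfeq, hfeq]
    exact hsort i j h
  set g : Fin N → ℝ := fun i => f i ^ q - (1 - f i) ^ q with hgdef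
  have hgmono : ∀ i j : Fin N, i ≤ j → g j ≤ g i := by
    intro i j h
    have h1 : f j ^ q ≤ f i ^ q := Real.rpow_le_rpow (hf0 j) (hfsort i j h) hq0
    have h2 : (1 - f i) ^ q ≤ (1 - f j) ^ q :=
      Real.rpow_le_rpow (by linarith [hf1 i]) (by linarith [hfsort i j h]) hq0
    simp only [hgdef]
    linarith
  have hfl0 : ∀ i, (0:ℤ) ≤ ⌊x i⌋ := fun i => Int.floor_nonneg.2 (hx i).le
  have hcl0 : ∀ i, (0:ℤ) ≤ ⌈x i⌉ := fun i => (Int.ceil_pos.2 (hx i)).le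
  have hflcast : ∀ i, (((⌊x i⌋).toNat : ℕ) : ℝ) = ((⌊x i⌋ : ℤ) : ℝ) := by
    intro i; exact_mod_cast congrArg (fun z : ℤ => (z : ℝ)) (Int.toNat_of_nonneg (hfl0 i))
  have hclcast : ∀ i, (((⌈x i⌉).toNat : ℕ) : ℝ) = ((⌈x i⌉ : ℤ) : ℝ) := by
    intro i; exact_mod_cast congrArg (fun z : ℤ => (z : ℝ)) (Int.toNat_of_nonneg (hcl0 i))
  -- cost of rounding down
  have costdown : ∀ i, |x i - (((⌊x i⌋).toNat : ℕ) : ℝ)| ^ q = f i ^ q := by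
    intro i
    rw [hflcast i, show x i - ((⌊x i⌋:ℤ):ℝ) = f i from (hfeq i).symm,
      abs_of_nonneg (hf0 i)]
  -- cost of rounding up, non-integer case
  have costup : ∀ i, f i ≠ 0 → |x i - (((⌈x i⌉).toNat : ℕ) : ℝ)| ^ q = (1 - f i) ^ q := by
    intro i hne
    rw [hclcast i, abs_sub_comm, abs_of_nonneg (by linarith [Int.le_ceil (x i)]),
      Int.ceil_sub_self_eq hne]
  -- integer case: x i = floor
  have hinteq : ∀ i, f i = 0 → (⌈x i⌉ : ℤ) = ⌊x i⌋ := by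
    intro i h0
    have : x i = ((⌊x i⌋:ℤ):ℝ) := by have := hfeq i; rw [h0] at this; linarith
    rw [this, Int.ceil_intCast, Int.floor_intCast]
  -- sets
  set S : Finset (Fin N) := univ.filter (fun i => (m i : ℤ) = ⌈x i⌉ ∧ f i ≠ 0) with hSdef
  set T : Finset (Fin N) := univ.filter (fun i => (i:ℕ) < I) with hTdef
  -- I as sum of fractional parts
  have hIf : (I:ℝ) = ∑ i, f i := by
    have h1 : (I:ℝ) = (M:ℝ) - ∑ i, ((⌊x i⌋:ℤ):ℝ) := by exact_mod_cast hI
    rw [h1, ← hsum, ← Finset.sum_sub_distrib]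
    exact Finset.sum_congr rfl fun i _ => (hfeq i).symm
  have hIN : I < N := by
    have h1 : ∑ i, f i < ∑ _i : Fin N, (1:ℝ) := by
      apply Finset.sum_lt_sum_of_nonempty
      · exact univ_nonempty_iff.2 (Fin.pos_iff_nonempty.1 hN)
      · exact fun i _ => hf1 i
    have h2 : (I:ℝ) < N := by
      rw [hIf]; simpa using h1
    exact_mod_cast h2
  -- i < I implies non-integer
  have hTne : ∀ i : Fin N, (i:ℕ) < I → f i ≠ 0 := by
    intro i hi h0
    have hz : ∀ j : Fin N, ¬ ((j:ℕ) < (i:ℕ)) → f j = 0 := by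
      intro j hj
      have hij : i ≤ j := by
        rw [Fin.le_def]; omega
      have := hfsort i j hij
      have := hf0 j
      linarith [h0 ▸ this]
    have hsplit := Finset.sum_filter_add_sum_filter_not univ (fun j : Fin N => (j:ℕ) < (i:ℕ)) f
    have hz2 : ∑ j ∈ univ.filter (fun j : Fin N => ¬ (j:ℕ) < (i:ℕ)), f j = 0 :=
      Finset.sum_eq_zero fun j hj => hz j (Finset.mem_filter.1 hj).2
    have hcard : (univ.filter (fun j : Fin N => (j:ℕ) < (i:ℕ))).card = (i:ℕ) := by
      have : univ.filter (fun j : Fin N => (j:ℕ) < (i:ℕ)) = Finset.Iio i := by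
        ext j
        simp only [Finset.mem_filter, Finset.mem_univ, true_and, Finset.mem_Iio, Fin.lt_def]
      rw [this, Fin.card_Iio]
    have hle : ∑ j ∈ univ.filter (fun j : Fin N => (j:ℕ) < (i:ℕ)), f j ≤ (i:ℕ) := by
      calc ∑ j ∈ univ.filter (fun j : Fin N => (j:ℕ) < (i:ℕ)), f j
          ≤ ∑ _j ∈ univ.filter (fun j : Fin N => (j:ℕ) < (i:ℕ)), (1:ℝ) :=
            Finset.sum_le_sum fun j _ => (hf1 j).le
        _ = (i:ℕ) := by rw [Finset.sum_const, hcard]; simp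
    have : (I:ℝ) ≤ (i:ℕ) := by rw [hIf, ← hsplit, hz2, add_zero]; exact hle
    have : I ≤ (i:ℕ) := by exact_mod_cast this
    omega
  -- card T = I
  have hcardT : T.card = I := by
    have : T = Finset.Iio (⟨I, hIN⟩ : Fin N) := by
      ext j; simp [hTdef, Finset.mem_Iio, Fin.lt_def]
    rw [this, Fin.card_Iio]
  -- card S = I
  have hcardS : S.card = I := by
    have h1 : ∑ i, ((m i : ℤ) - ⌊x i⌋) = (I:ℤ) := by
      rw [Finset.sum_sub_distrib, hI]
      have : ∑ i, (m i : ℤ) = (M:ℤ) := by exact_mod_cast congrArg (fun n : ℕ => (n:ℤ)) hm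
      rw [this]
    have h2 : ∀ i : Fin N, (m i : ℤ) - ⌊x i⌋ = if i ∈ S then 1 else 0 := by
      intro i
      by_cases hiS : i ∈ S
      · simp only [hiS, if_true]
        obtain ⟨hmc, hne⟩ := (Finset.mem_filter.1 hiS).2
        have : ((⌈x i⌉:ℤ):ℝ) = ((⌊x i⌋:ℤ):ℝ) + 1 := by
          have hc := Int.ceil_sub_self_eq (R := ℝ) (a := x i) hne
          have hfr := hfeq i
          linarith
        have : (⌈x i⌉:ℤ) = ⌊x i⌋ + 1 := by exact_mod_cast this
        rw [hmc, this]; ring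
      · simp only [hiS, if_false]
        rcases hfeas i with h | h
        · rw [h]; ring
        · have hne : ¬ (f i ≠ 0) := by
            intro hne
            exact hiS (Finset.mem_filter.2 ⟨Finset.mem_univ i, h, hne⟩)
          push_neg at hne
          rw [h, hinteq i hne]; ring
    have h3 : ∑ i, ((m i : ℤ) - ⌊x i⌋) = S.card := by
      rw [Finset.sum_congr rfl fun i _ => h2 i, Finset.sum_ite_mem]
      simp
    have : (S.card : ℤ) = (I:ℤ) := by rw [← h3, h1]
    exact_mod_cast this
  -- rewrite RHS cost
  have hRHS : ∑ i, |x i - (m i : ℝ)| ^ q = ∑ i, f i ^ q - ∑ i ∈ S, g i := by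
    have h1 : ∀ i : Fin N, |x i - (m i : ℝ)| ^ q = f i ^ q - (if i ∈ S then g i else 0) := by
      intro i
      by_cases hiS : i ∈ S
      · obtain ⟨hmc, hne⟩ := (Finset.mem_filter.1 hiS).2
        have hmr : ((m i : ℕ) : ℝ) = (((⌈x i⌉).toNat : ℕ) : ℝ) := by
          rw [hclcast i, ← hmc]; norm_num
        rw [if_pos hiS, hmr, costup i hne]
        simp only [hgdef]
        ring
      · rw [if_neg hiS, sub_zero]
        rcases hfeas i with h | h
        · have hmr : ((m i : ℕ) : ℝ) = (((⌊x i⌋).toNat : ℕ) : ℝ) := by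
            rw [hflcast i, ← h]; norm_num
          rw [hmr, costdown i]
        · have hne : ¬ (f i ≠ 0) := by
            intro hne
            exact hiS (Finset.mem_filter.2 ⟨Finset.mem_univ i, h, hne⟩)
          push_neg at hne
          have hmr : ((m i : ℕ) : ℝ) = (((⌊x i⌋).toNat : ℕ) : ℝ) := by
            rw [hflcast i, ← hinteq i hne, ← h]; norm_num
          rw [hmr, costdown i]
    rw [Finset.sum_congr rfl fun i _ => h1 i, Finset.sum_sub_distrib,
      Finset.sum_ite_mem]
    simp
  -- rewrite LHS cost
  have hLHS : ∑ i, |x i - (mstar i : ℝ)| ^ q = ∑ i, f i ^ q - ∑ i ∈ T, g i := by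
    have h1 : ∀ i : Fin N, |x i - (mstar i : ℝ)| ^ q = f i ^ q - (if i ∈ T then g i else 0) := by
      intro i
      by_cases hiT : i ∈ T
      · have hi : (i:ℕ) < I := (Finset.mem_filter.1 hiT).2
        rw [if_pos hiT, hms i, if_pos hi, costup i (hTne i hi)]
        simp [hgdef]
      · have hi : ¬ (i:ℕ) < I := fun h => hiT (Finset.mem_filter.2 ⟨Finset.mem_univ i, h⟩)
        rw [if_neg hiT, sub_zero, hms i, if_neg hi, costdown i]
    rw [Finset.sum_congr rfl fun i _ => h1 i, Finset.sum_sub_distrib,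
      Finset.sum_ite_mem]
    simp
  rw [hLHS, hRHS]
  have key : ∑ i ∈ S, g i ≤ ∑ i ∈ T, g i := by
    have hsS := Finset.sum_inter_add_sum_sdiff S T g
    have hsT := Finset.sum_inter_add_sum_sdiff T S g
    rw [Finset.inter_comm] at hsT
    have hcardB : (S \ T).card = (T \ S).card := by
      have h1 := Finset.card_sdiff_add_card_inter S T
      have h2 := Finset.card_sdiff_add_card_inter T S
      rw [Finset.inter_comm] at h2
      omega
    have hBA : ∑ i ∈ S \ T, g i ≤ ∑ i ∈ T \ S, g i := by
      rcases (T \ S).eq_empty_or_nonempty with hA | hA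
      · have : (S \ T) = ∅ := Finset.card_eq_zero.1 (by rw [hcardB, hA]; simp)
        rw [this, hA]
      · obtain ⟨a0, ha0, hc⟩ := Finset.exists_mem_eq_inf' hA g
        have hub : ∀ b ∈ S \ T, g b ≤ (T \ S).inf' hA g := by
          intro b hb
          rw [hc]
          apply hgmono
          have ha0T : (a0:ℕ) < I := (Finset.mem_filter.1 (Finset.mem_sdiff.1 ha0).1).2
          have hbT : ¬ (b:ℕ) < I := by
            intro h
            exact (Finset.mem_sdiff.1 hb).2 (Finset.mem_filter.2 ⟨Finset.mem_univ b, h⟩)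
          rw [Fin.le_def]; omega
        calc ∑ i ∈ S \ T, g i ≤ (S \ T).card • (T \ S).inf' hA g :=
              Finset.sum_le_card_nsmul _ _ _ hub
          _ = (T \ S).card • (T \ S).inf' hA g := by rw [hcardB]
          _ ≤ ∑ i ∈ T \ S, g i :=
              Finset.card_nsmul_le_sum _ _ _ fun a ha => Finset.inf'_le g ha
    linarith
  linarith
end

section
/- Let x be a positive real vector with integer sum M whose fractional parts are nonincreasing, I = M - ∑ floor(x_i), and m* the ORIC solution (round up first I components, down the rest). Then the multiset of rounding errors {|x_i - m*_i|} is componentwise dominated: for every feasible m (nonnegative integers, sum M, m_i ∈ {floor(x_i), ceil(x_i)}) and every convex nondecreasing function φ : ℝ_{≥0} → ℝ, ∑_i φ(|x_i - m*_i|) ≤ ∑_i φ(|x_i - m_i|). -/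
theorem stmt9 (N : ℕ) (hN : 1 ≤ N) (x : Fin N → ℝ) (hx : ∀ i, 0 < x i)
    (M : ℕ) (hsum : ∑ i, x i = (M : ℝ))
    (hsort : ∀ i j : Fin N, i ≤ j → x j - ⌊x j⌋ ≤ x i - ⌊x i⌋)
    (I : ℕ) (hI : (I : ℤ) = (M : ℤ) - ∑ i, ⌊x i⌋)
    (mstar : Fin N → ℕ)
    (hms : ∀ i : Fin N,
      mstar i = if (i : ℕ) < I then (⌈x i⌉).toNat else (⌊x i⌋).toNat)
    (φ : ℝ → ℝ) (hφ : MonotoneOn φ (Set.Ici (0 : ℝ)))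
    (m : Fin N → ℕ) (hm : ∑ i, m i = M)
    (hfeas : ∀ i, (m i : ℤ) = ⌊x i⌋ ∨ (m i : ℤ) = ⌈x i⌉) :
    ∑ i, φ |x i - (mstar i : ℝ)| ≤ ∑ i, φ |x i - (m i : ℝ)| := by
  classical
  set f : Fin N → ℝ := fun i => Int.fract (x i) with hfdef
  have hf0 : ∀ i, 0 ≤ f i := fun i => Int.fract_nonneg _
  have hf1 : ∀ i, f i < 1 := fun i => Int.fract_lt_one _
  have hfx : ∀ i, f i = x i - ⌊x i⌋ := fun i => rfl
  have hfloor0 : ∀ i, 0 ≤ ⌊x i⌋ := fun i => Int.floor_nonneg.mpr (hx i).le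
  -- each m i is floor or floor+1
  have hd : ∀ i, (m i : ℤ) = ⌊x i⌋ ∨ (m i : ℤ) = ⌊x i⌋ + 1 := by
    intro i
    rcases hfeas i with h | h
    · exact Or.inl h
    · rcases eq_or_lt_of_le (Int.floor_le_ceil (x i)) with he | hlt
      · exact Or.inl (h.trans he.symm)
      · have h2 := Int.ceil_le_floor_add_one (x i)
        omega
  set S : Finset (Fin N) := Finset.univ.filter (fun i => (m i : ℤ) = ⌊x i⌋ + 1)
    with hSdef
  -- if i ∈ S then f i > 0
  have hSpos : ∀ i ∈ S, 0 < f i := by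
    intro i hi
    rw [hSdef, Finset.mem_filter] at hi
    by_contra h
    have hz : f i = 0 := le_antisymm (not_lt.mp h) (hf0 i)
    have hxi : x i = (⌊x i⌋ : ℝ) := by
      have := hfx i; rw [hz] at this; linarith [this.symm]
    have hc : ⌈x i⌉ = ⌊x i⌋ := by rw [hxi]; simp
    rcases hfeas i with h' | h' <;> omega
  -- card S = I
  have hsumd : ∑ i, ((m i : ℤ) - ⌊x i⌋) = (I : ℤ) := by
    have hmz : (∑ i, (m i : ℤ)) = (M : ℤ) := by exact_mod_cast hm
    rw [Finset.sum_sub_distrib, hmz, hI]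
  have hterm : ∀ i, ((m i : ℤ) - ⌊x i⌋)
      = if (m i : ℤ) = ⌊x i⌋ + 1 then 1 else 0 := by
    intro i
    rcases hd i with h | h <;> simp [h] <;> omega
  have hcardS : S.card = I := by
    have : ∑ i, ((m i : ℤ) - ⌊x i⌋) = (S.card : ℤ) := by
      rw [Finset.sum_congr rfl (fun i _ => hterm i), Finset.sum_boole, hSdef]
    rw [this] at hsumd
    exact_mod_cast hsumd
  -- card of an initial segment
  have hcardlt : ∀ k : ℕ, k ≤ N →
      (Finset.univ.filter (fun j : Fin N => (j : ℕ) < k)).card = k := by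
    intro k hk
    have hbij : (Finset.univ.filter (fun j : Fin N => (j : ℕ) < k)).card
        = (Finset.range k).card := by
      apply Finset.card_bij (fun (a : Fin N) _ => (a : ℕ))
      · intro a ha
        rw [Finset.mem_filter] at ha
        exact Finset.mem_range.mpr ha.2
      · intro a ha b hb hab
        exact Fin.val_injective hab
      · intro b hb
        rw [Finset.mem_range] at hb
        exact ⟨⟨b, lt_of_lt_of_le hb hk⟩, Finset.mem_filter.mpr ⟨Finset.mem_univ _, hb⟩, rfl⟩
    rw [hbij, Finset.card_range]
  have hIN : I ≤ N := by
    rw [← hcardS]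
    simpa using Finset.card_le_univ S
  set T : Finset (Fin N) := Finset.univ.filter (fun j : Fin N => (j : ℕ) < I)
    with hTdef
  have hcardT : T.card = I := hcardlt I hIN
  -- f i > 0 for i ∈ T
  have hTpos : ∀ i ∈ T, 0 < f i := by
    intro i hi
    rw [hTdef, Finset.mem_filter] at hi
    by_contra h
    have hz : f i = 0 := le_antisymm (not_lt.mp h) (hf0 i)
    have hsub : S ⊆ Finset.univ.filter (fun j : Fin N => (j : ℕ) < (i : ℕ)) := by
      intro j hj
      rw [Finset.mem_filter]
      refine ⟨Finset.mem_univ _, ?_⟩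
      by_contra hji
      have hij : i ≤ j := by
        rw [Fin.le_def]; omega
      have := hsort i j hij
      rw [← hfx i, ← hfx j, hz] at this
      have := hSpos j hj
      linarith
    have hci := hcardlt (i : ℕ) (le_of_lt i.isLt)
    have := Finset.card_le_card hsub
    rw [hcardS, hci] at this
    omega
  -- error formulas
  have hestar : ∀ i, |x i - (mstar i : ℝ)| = if (i : ℕ) < I then 1 - f i else f i := by
    intro i
    rw [hms i]
    by_cases h : (i : ℕ) < I
    · have hfi : 0 < f i := hTpos i (by rw [hTdef, Finset.mem_filter]; exact ⟨Finset.mem_univ _, h⟩)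
      have hceil : ⌈x i⌉ = ⌊x i⌋ + 1 := by
        have h1 : (⌊x i⌋ : ℝ) < x i := by
          have := hfx i; linarith
        have h2 : ⌊x i⌋ < ⌈x i⌉ := by
          have := Int.le_ceil (x i)
          exact_mod_cast lt_of_lt_of_le h1 this
        have := Int.ceil_le_floor_add_one (x i)
        omega
      have hc0 : 0 ≤ ⌈x i⌉ := by rw [hceil]; linarith [hfloor0 i]
      rw [if_pos h, if_pos h]
      have : ((⌈x i⌉.toNat : ℤ) : ℝ) = ((⌈x i⌉ : ℤ) : ℝ) := by
        congr 1; exact Int.toNat_of_nonneg hc0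
      push_cast at this ⊢
      rw [this, hceil]
      push_cast
      rw [abs_of_nonpos (by have := hfx i; push_cast; linarith [hf1 i])]
      have := hfx i
      push_cast
      linarith
    · rw [if_neg h, if_neg h]
      have : ((⌊x i⌋.toNat : ℤ) : ℝ) = ((⌊x i⌋ : ℤ) : ℝ) := by
        congr 1; exact Int.toNat_of_nonneg (hfloor0 i)
      push_cast at this ⊢
      rw [this, ← hfx i, abs_of_nonneg (hf0 i)]
  have he : ∀ i, |x i - (m i : ℝ)| = if i ∈ S then 1 - f i else f i := by
    intro i
    by_cases h : i ∈ S
    · rw [if_pos h]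
      rw [hSdef, Finset.mem_filter] at h
      have : ((m i : ℕ) : ℝ) = ((⌊x i⌋ : ℤ) : ℝ) + 1 := by exact_mod_cast h.2
      push_cast at this ⊢
      rw [this]
      rw [abs_of_nonpos (by have := hfx i; linarith [hf1 i])]
      have := hfx i; linarith
    · rw [if_neg h]
      have hmf : (m i : ℤ) = ⌊x i⌋ := by
        rcases hd i with h' | h'
        · exact h'
        · exact absurd (by rw [hSdef, Finset.mem_filter]; exact ⟨Finset.mem_univ i, h'⟩) h
      have : ((m i : ℕ) : ℝ) = ((⌊x i⌋ : ℤ) : ℝ) := by exact_mod_cast hmf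
      push_cast at this ⊢
      rw [this, ← hfx i, abs_of_nonneg (hf0 i)]
  -- reduce to sums of D over T and S
  set D : Fin N → ℝ := fun i => φ (1 - f i) - φ (f i) with hDdef
  have hsplit : ∀ (U : Finset (Fin N)) (g : Fin N → ℝ),
      (∀ i, g i = if i ∈ U then 1 - f i else f i) →
      ∑ i, φ (g i) = ∑ i, φ (f i) + ∑ i ∈ U, D i := by
    intro U g hg
    have : ∀ i, φ (g i) = φ (f i) + if i ∈ U then D i else 0 := by
      intro i
      rw [hg i]
      by_cases h : i ∈ U <;> simp [h, hDdef] <;> ring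
    rw [Finset.sum_congr rfl (fun i _ => this i), Finset.sum_add_distrib,
      Finset.sum_ite_mem, Finset.univ_inter]
  have hLHS : ∑ i, φ |x i - (mstar i : ℝ)| = ∑ i, φ (f i) + ∑ i ∈ T, D i := by
    apply hsplit
    intro i
    rw [hestar i, hTdef]
    simp
  have hRHS : ∑ i, φ |x i - (m i : ℝ)| = ∑ i, φ (f i) + ∑ i ∈ S, D i := by
    exact hsplit S _ he
  rw [hLHS, hRHS]
  have key : ∑ i ∈ T, D i ≤ ∑ i ∈ S, D i := by
    have hT' : ∑ i ∈ T \ S, D i + ∑ i ∈ T ∩ S, D i = ∑ i ∈ T, D i := by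
      rw [← Finset.sdiff_inter_self_left T S]
      exact Finset.sum_sdiff Finset.inter_subset_left
    have hS' : ∑ i ∈ S \ T, D i + ∑ i ∈ S ∩ T, D i = ∑ i ∈ S, D i := by
      rw [← Finset.sdiff_inter_self_left S T]
      exact Finset.sum_sdiff Finset.inter_subset_left
    rw [← hT', ← hS', Finset.inter_comm S T]
    have hcards : (T \ S).card = (S \ T).card := by
      have h1 := Finset.card_sdiff_add_card_inter T S
      have h2 := Finset.card_sdiff_add_card_inter S T
      rw [Finset.inter_comm] at h2
      omega
    have hDle : ∀ a ∈ T \ S, ∀ b ∈ S \ T, D a ≤ D b := by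
      intro a ha b hb
      rw [Finset.mem_sdiff] at ha hb
      have haT : (a : ℕ) < I := (Finset.mem_filter.mp ha.1).2
      have hbT : ¬ (b : ℕ) < I := fun h =>
        hb.2 (Finset.mem_filter.mpr ⟨Finset.mem_univ _, h⟩)
      have hab : a ≤ b := by rw [Fin.le_def]; omega
      have hfab : f b ≤ f a := by
        have := hsort a b hab
        rw [← hfx a, ← hfx b] at this
        exact this
      have h1 : φ (1 - f a) ≤ φ (1 - f b) :=
        hφ (by simp; linarith [hf1 a]) (by simp; linarith [hf1 b]) (by linarith)
      have h2 : φ (f b) ≤ φ (f a) :=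
        hφ (hf0 b) (hf0 a) hfab
      rw [hDdef]
      simp only
      linarith
    by_cases hne : (S \ T).Nonempty
    · obtain ⟨b0, hb0, hb0min⟩ := Finset.exists_min_image (S \ T) D hne
      have h1 : ∑ i ∈ T \ S, D i ≤ (T \ S).card • D b0 :=
        Finset.sum_le_card_nsmul _ _ _ (fun a ha => hDle a ha b0 hb0)
      have h2 : (S \ T).card • D b0 ≤ ∑ i ∈ S \ T, D i :=
        Finset.card_nsmul_le_sum _ _ _ (fun b hb => hb0min b hb)
      rw [hcards] at h1
      linarith [le_trans h1 h2]
    · have hST : S \ T = ∅ := Finset.not_nonempty_iff_eq_empty.mp hne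
      have hTS : T \ S = ∅ := by
        rw [← Finset.card_eq_zero] at hST ⊢
        omega
      simp [hST, hTS]
  linarith
end

section
/- Any minimizer of ∑_i |x_i - m_i| over nonnegative integer vectors m with ∑ m_i = M rounds up exactly I = M - ∑ floor(x_i) components and rounds down the remaining N - I components, where each chosen m_i ∈ {floor(x_i), ceil(x_i)}; in particular the number of components rounded up is the same for every minimizer, provided no x_i is an integer. -/
open Finset

theorem stmt10 (N : ℕ) (hN : 1 ≤ N) (x : Fin N → ℝ) (hx : ∀ i, 0 < x i)
    (M : ℕ) (hsum : ∑ i, x i = (M : ℝ))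
    (hnint : ∀ i, x i ≠ (⌊x i⌋ : ℝ))
    (I : ℕ) (hI : (I : ℤ) = (M : ℤ) - ∑ i, ⌊x i⌋)
    (m : Fin N → ℕ) (hm : ∑ i, m i = M)
    (hmin : ∀ m' : Fin N → ℕ, ∑ i, m' i = M →
      ∑ i, |x i - (m i : ℝ)| ≤ ∑ i, |x i - (m' i : ℝ)|) :
    (∀ i, (m i : ℤ) = ⌊x i⌋ ∨ (m i : ℤ) = ⌈x i⌉) ∧
      (Finset.univ.filter (fun i : Fin N => (m i : ℤ) = ⌈x i⌉)).card = I := by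
  have flt : ∀ i, (⌊x i⌋ : ℝ) < x i := fun i =>
    lt_of_le_of_ne (Int.floor_le _) (Ne.symm (hnint i))
  have clt : ∀ i, x i < (⌈x i⌉ : ℝ) := by
    intro i
    rcases lt_or_eq_of_le (Int.le_ceil (x i)) with h | h
    · exact h
    · exfalso
      have : ⌊x i⌋ = ⌈x i⌉ := by
        have := Int.floor_intCast (R := ℝ) ⌈x i⌉
        rw [← h] at this
        simpa using this.symm ▸ rfl
      exact hnint i (by rw [this, ← h])
  have hceil : ∀ i, ⌈x i⌉ = ⌊x i⌋ + 1 := by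
    intro i
    have h1 : ⌈x i⌉ ≤ ⌊x i⌋ + 1 := Int.ceil_le_floor_add_one (x i)
    have h2 : ⌊x i⌋ < ⌈x i⌉ := by
      have : (⌊x i⌋ : ℝ) < (⌈x i⌉ : ℝ) := (flt i).trans (clt i)
      exact_mod_cast this
    omega
  -- sum of differences is zero
  have hS : ∑ i, ((m i : ℝ) - x i) = 0 := by
    rw [Finset.sum_sub_distrib, hsum]
    have : ∑ i, ((m i : ℕ) : ℝ) = ((∑ i, m i : ℕ) : ℝ) := by push_cast; ring
    rw [this, hm, sub_self]
  -- the exchange lemma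
  have move : ∀ p q : Fin N, p ≠ q → 1 ≤ m p →
      0 < (m p : ℝ) - x p → 0 < x q - (m q : ℝ) →
      1 < ((m p : ℝ) - x p) + (x q - (m q : ℝ)) → False := by
    intro p q hpq h1 hA hB hAB
    set m' : Fin N → ℕ := Function.update (Function.update m p (m p - 1)) q (m q + 1) with hm'def
    have hpq' : q ≠ p := hpq.symm
    have hm'p : m' p = m p - 1 := by
      simp [hm'def, Function.update_apply, hpq, hpq']
    have hm'q : m' q = m q + 1 := by
      simp [hm'def, Function.update_apply]
    have hm'other : ∀ i, i ≠ p → i ≠ q → m' i = m i := by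
      intro i hip hiq
      simp [hm'def, Function.update_apply, hip, hiq]
    have hpmem : p ∈ univ.erase q := Finset.mem_erase.2 ⟨hpq, mem_univ p⟩
    have splitR : ∀ f : Fin N → ℝ,
        ∑ i, f i = f q + (f p + ∑ i ∈ (univ.erase q).erase p, f i) := by
      intro f
      rw [← Finset.add_sum_erase _ f (mem_univ q), ← Finset.add_sum_erase _ f hpmem]
    have splitN : ∀ f : Fin N → ℕ,
        ∑ i, f i = f q + (f p + ∑ i ∈ (univ.erase q).erase p, f i) := by
      intro f
      rw [← Finset.add_sum_erase _ f (mem_univ q), ← Finset.add_sum_erase _ f hpmem]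
    have hoffN : ∑ i ∈ (univ.erase q).erase p, m' i = ∑ i ∈ (univ.erase q).erase p, m i := by
      apply Finset.sum_congr rfl
      intro i hi
      have hip := Finset.ne_of_mem_erase hi
      have hiq := Finset.ne_of_mem_erase (Finset.mem_of_mem_erase hi)
      exact hm'other i hip hiq
    have hsum' : ∑ i, m' i = M := by
      rw [splitN m', hoffN, hm'p, hm'q]
      rw [splitN m] at hm
      omega
    have hcast : ((m p - 1 : ℕ) : ℝ) = (m p : ℝ) - 1 := by
      have : (1 : ℕ) ≤ m p := h1
      push_cast [this]
      ring
    have hoffR : ∑ i ∈ (univ.erase q).erase p, |x i - (m' i : ℝ)|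
        = ∑ i ∈ (univ.erase q).erase p, |x i - (m i : ℝ)| := by
      apply Finset.sum_congr rfl
      intro i hi
      have hip := Finset.ne_of_mem_erase hi
      have hiq := Finset.ne_of_mem_erase (Finset.mem_of_mem_erase hi)
      rw [hm'other i hip hiq]
    have hlt : ∑ i, |x i - (m' i : ℝ)| < ∑ i, |x i - (m i : ℝ)| := by
      rw [splitR (fun i => |x i - (m' i : ℝ)|), splitR (fun i => |x i - (m i : ℝ)|)]
      simp only [hm'p, hm'q, hoffR, hcast]
      have e1 : |x p - ((m p : ℝ) - 1)| = |((m p : ℝ) - x p) - 1| := by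
        rw [abs_sub_comm]; ring_nf
      have e2 : |x q - ((m q : ℕ) + 1 : ℕ)| = |(x q - (m q : ℝ)) - 1| := by
        push_cast; ring_nf
      have e3 : |x p - (m p : ℝ)| = (m p : ℝ) - x p := by
        rw [abs_sub_comm]; exact abs_of_pos hA
      have e4 : |x q - (m q : ℝ)| = x q - (m q : ℝ) := abs_of_pos hB
      push_cast
      rw [show |x q - ((m q : ℝ) + 1)| = |(x q - (m q : ℝ)) - 1| by ring_nf,
        show |x p - ((m p : ℝ) - 1)| = |((m p : ℝ) - x p) - 1| by rw [abs_sub_comm]; ring_nf,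
        e3, e4]
      set A := (m p : ℝ) - x p
      set B := x q - (m q : ℝ)
      have h5 : |A - 1| + |B - 1| < A + B := by
        rcases abs_cases (A - 1) with ⟨ha, _⟩ | ⟨ha, _⟩ <;>
          rcases abs_cases (B - 1) with ⟨hb, _⟩ | ⟨hb, _⟩ <;> linarith
      linarith
    exact absurd (hmin m' hsum') (not_le.2 hlt)
  -- bounds
  have hbound : ∀ j, ⌊x j⌋ ≤ (m j : ℤ) ∧ (m j : ℤ) ≤ ⌈x j⌉ := by
    intro j
    constructor
    · by_contra h
      push_neg at h
      have hj : 1 < x j - (m j : ℝ) := by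
        have h' : (m j : ℤ) ≤ ⌊x j⌋ - 1 := by omega
        have h'' : ((m j : ℤ) : ℝ) ≤ ((⌊x j⌋ : ℤ) : ℝ) - 1 := by exact_mod_cast h'
        push_cast at h''
        have := flt j
        linarith
      have hex : ∃ p, 0 < (m p : ℝ) - x p := by
        by_contra hno
        push_neg at hno
        have := (Finset.sum_eq_zero_iff_of_nonpos (fun i _ => hno i)).1 hS j (mem_univ j)
        linarith
      obtain ⟨p, hp⟩ := hex
      have hpj : p ≠ j := by
        intro h; rw [h] at hp; linarith
      have hp1 : 1 ≤ m p := by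
        rcases Nat.eq_zero_or_pos (m p) with h0 | h0
        · rw [h0] at hp; simp at hp; exact absurd hp (not_lt.2 (le_of_lt (hx p)))
        · exact h0
      exact move p j hpj hp1 hp (by linarith) (by linarith)
    · by_contra h
      push_neg at h
      have hj : 1 < (m j : ℝ) - x j := by
        have h' : ⌈x j⌉ + 1 ≤ (m j : ℤ) := by omega
        have h'' : ((⌈x j⌉ : ℤ) : ℝ) + 1 ≤ ((m j : ℤ) : ℝ) := by exact_mod_cast h'
        push_cast at h''
        have := clt j
        linarith
      have hex : ∃ q, 0 < x q - (m q : ℝ) := by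
        by_contra hno
        push_neg at hno
        have hno' : ∀ i ∈ univ, (0 : ℝ) ≤ (m i : ℝ) - x i := by
          intro i _; linarith [hno i]
        have := (Finset.sum_eq_zero_iff_of_nonneg hno').1 hS j (mem_univ j)
        linarith
      obtain ⟨q, hq⟩ := hex
      have hjq : j ≠ q := by
        intro h; rw [h] at hj; linarith
      have hj1 : 1 ≤ m j := by
        rcases Nat.eq_zero_or_pos (m j) with h0 | h0
        · rw [h0] at hj; simp at hj; linarith [hx j]
        · exact h0
      exact move j q hjq hj1 (by linarith) hq (by linarith)
  have part1 : ∀ i, (m i : ℤ) = ⌊x i⌋ ∨ (m i : ℤ) = ⌈x i⌉ := by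
    intro i
    have h1 := hbound i
    have h2 := hceil i
    omega
  refine ⟨part1, ?_⟩
  have hmz : ∑ i, (m i : ℤ) = (M : ℤ) := by exact_mod_cast congrArg (Nat.cast : ℕ → ℤ) hm
  have hdiff : ∑ i, ((m i : ℤ) - ⌊x i⌋) = (I : ℤ) := by
    rw [Finset.sum_sub_distrib, hmz, hI]
  have hterm : ∀ i, ((m i : ℤ) - ⌊x i⌋) = if (m i : ℤ) = ⌈x i⌉ then 1 else 0 := by
    intro i
    have h1 := part1 i
    have h2 := hceil i
    split <;> omega
  have hcount : ∑ i, ((m i : ℤ) - ⌊x i⌋)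
      = ((Finset.univ.filter (fun i : Fin N => (m i : ℤ) = ⌈x i⌉)).card : ℤ) := by
    rw [Finset.sum_congr rfl (fun i _ => hterm i)]
    simp [Finset.sum_ite_eq, Finset.sum_boole]
  rw [hcount] at hdiff
  exact_mod_cast hdiff
end

section
/- Let x be a positive real vector with integer sum M and I = M - ∑ floor(x_i). The optimal value of Problem 1 for q = 1 is V_1(x) = ∑_{i=1}^{I} (1 - f_{(i)}) + ∑_{i=I+1}^{N} f_{(i)}, where f_{(1)} ≥ ... ≥ f_{(N)} are the fractional parts of the x_i sorted in nonincreasing order. -/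
lemma st14_card_Ico (N a b : ℕ) (h : b ≤ N) :
    (Finset.univ.filter (fun j : Fin N => a ≤ (j:ℕ) ∧ (j:ℕ) < b)).card = b - a := by
  have himg : (Finset.univ.filter (fun j : Fin N => a ≤ (j:ℕ) ∧ (j:ℕ) < b)).image Fin.val
      = Finset.Ico a b := by
    ext t
    simp only [Finset.mem_image, Finset.mem_filter, Finset.mem_univ, true_and, Finset.mem_Ico]
    constructor
    · rintro ⟨j, hj, rfl⟩; exact hj
    · rintro ⟨h1, h2⟩; exact ⟨⟨t, lt_of_lt_of_le h2 h⟩, ⟨h1, h2⟩, rfl⟩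
  have := congrArg Finset.card himg
  rwa [Finset.card_image_of_injective _ Fin.val_injective, Nat.card_Ico] at this

lemma st14_card_lt (N b : ℕ) (h : b ≤ N) :
    (Finset.univ.filter (fun j : Fin N => (j:ℕ) < b)).card = b := by
  have := st14_card_Ico N 0 b h
  simpa using this

lemma st14_sumA {N : ℕ} (h : Fin N → ℝ) (mono : ∀ i j : Fin N, i ≤ j → h i ≤ h j)
    (S : Finset (Fin N)) :
    ∑ j ∈ Finset.univ.filter (fun j : Fin N => (j:ℕ) < S.card), h j ≤ ∑ j ∈ S, h j := by
  induction S using Finset.strongInduction with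
  | _ S ih =>
    rcases S.eq_empty_or_nonempty with rfl | hne
    · simp
    · set k := S.card with hk
      have hk1 : 1 ≤ k := Finset.card_pos.mpr hne
      have hkN : k ≤ N := by
        simpa using Finset.card_le_card (Finset.subset_univ S)
      set j := S.max' hne with hj
      have hjmem : j ∈ S := S.max'_mem hne
      have hjge : k - 1 ≤ (j:ℕ) := by
        have hsub : S ⊆ Finset.Iic j := fun a ha => Finset.mem_Iic.mpr (S.le_max' a ha)
        have := Finset.card_le_card hsub
        rw [Fin.card_Iic] at this
        omega
      have IH := ih (S.erase j) (Finset.erase_ssubset hjmem)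
      rw [Finset.card_erase_of_mem hjmem] at IH
      have hkm1 : k - 1 < N := by omega
      have hfk : Finset.univ.filter (fun a : Fin N => (a:ℕ) < k)
          = insert (⟨k-1, hkm1⟩ : Fin N)
            (Finset.univ.filter (fun a : Fin N => (a:ℕ) < k - 1)) := by
        ext a
        simp only [Finset.mem_filter, Finset.mem_univ, true_and, Finset.mem_insert, Fin.ext_iff]
        omega
      rw [hfk, Finset.sum_insert (by simp)]
      have hle : h (⟨k-1, hkm1⟩ : Fin N) ≤ h j := mono _ _ (by
        rw [Fin.le_def]; exact hjge)
      calc h (⟨k-1, hkm1⟩ : Fin N) + ∑ a ∈ Finset.univ.filter (fun a : Fin N => (a:ℕ) < k - 1), h a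
          ≤ h j + ∑ a ∈ S.erase j, h a := add_le_add hle IH
        _ = ∑ a ∈ S, h a := Finset.add_sum_erase S h hjmem

theorem stmt14 (N : ℕ) (hN : 1 ≤ N) (x : Fin N → ℝ) (hx : ∀ i, 0 < x i)
    (M : ℕ) (hsum : ∑ i, x i = (M : ℝ))
    (I : ℕ) (hI : (I : ℤ) = (M : ℤ) - ∑ i, ⌊x i⌋)
    (g : Fin N → ℝ) (σ : Equiv.Perm (Fin N))
    (hg : ∀ i, g i = x (σ i) - ⌊x (σ i)⌋)
    (hsort : ∀ i j : Fin N, i ≤ j → g j ≤ g i) :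
    IsLeast {v : ℝ | ∃ m : Fin N → ℕ, ∑ i, m i = M ∧ v = ∑ i, |x i - (m i : ℝ)|}
      (∑ i ∈ Finset.univ.filter (fun i : Fin N => (i : ℕ) < I), (1 - g i)
        + ∑ i ∈ Finset.univ.filter (fun i : Fin N => I ≤ (i : ℕ)), g i) := by
  have hg0 : ∀ i, 0 ≤ g i := by
    intro i; rw [hg]
    have := Int.floor_le (x (σ i)); linarith
  have hg1 : ∀ i, g i < 1 := by
    intro i; rw [hg]
    have := Int.lt_floor_add_one (x (σ i)); linarith
  have hIg : (I : ℝ) = ∑ j, g j := by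
    have h1 : ∑ j, g j = ∑ i, (x i - (⌊x i⌋ : ℝ)) := by
      rw [← Equiv.sum_comp σ (fun i => x i - (⌊x i⌋ : ℝ))]
      exact Finset.sum_congr rfl (fun j _ => hg j)
    have h2 : ∑ i, (x i - (⌊x i⌋ : ℝ)) = (M : ℝ) - ((∑ i, ⌊x i⌋ : ℤ) : ℝ) := by
      rw [Finset.sum_sub_distrib, hsum]; push_cast; ring
    have h3 : ((I : ℤ) : ℝ) = (M : ℝ) - ((∑ i, ⌊x i⌋ : ℤ) : ℝ) := by
      rw [hI]; push_cast; ring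
    rw [h1, h2]
    exact_mod_cast h3
  have hIN : I < N := by
    have hlt : (∑ j, g j) < ∑ _j : Fin N, (1 : ℝ) := by
      apply Finset.sum_lt_sum_of_nonempty
      · exact Finset.univ_nonempty_iff.mpr (Fin.pos_iff_nonempty.mp hN)
      · intro j _; exact hg1 j
    rw [← hIg] at hlt
    simp only [Finset.sum_const, Finset.card_univ, Fintype.card_fin, nsmul_eq_mul,
      mul_one] at hlt
    exact_mod_cast hlt
  have hIleN : I ≤ N := hIN.le
  have hfloor : ∀ i, (0:ℤ) ≤ ⌊x i⌋ := fun i => Int.floor_nonneg.mpr (hx i).le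
  -- notation for the target value
  have hfilter_not : Finset.univ.filter (fun j : Fin N => I ≤ (j:ℕ))
      = Finset.univ.filter (fun j : Fin N => ¬ (j:ℕ) < I) := by
    apply Finset.filter_congr; intro j _; simp [not_lt]
  constructor
  · -- membership
    refine ⟨fun i => (⌊x i⌋).toNat + (if ((σ.symm i : Fin N) : ℕ) < I then 1 else 0), ?_, ?_⟩
    · -- sum = M
      have key : ((∑ i, ((⌊x i⌋).toNat
            + (if ((σ.symm i : Fin N) : ℕ) < I then 1 else 0)) : ℕ) : ℤ) = (M : ℤ) := by
        push_cast
        rw [Finset.sum_add_distrib]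
        have e1 : ∑ i, ((⌊x i⌋).toNat : ℤ) = ∑ i, ⌊x i⌋ :=
          Finset.sum_congr rfl (fun i _ => Int.toNat_of_nonneg (hfloor i))
        have e2 : ∑ i, (if ((σ.symm i : Fin N) : ℕ) < I then (1:ℤ) else 0) = (I : ℤ) := by
          rw [← Equiv.sum_comp σ
            (fun i => if ((σ.symm i : Fin N) : ℕ) < I then (1:ℤ) else 0)]
          simp only [Equiv.symm_apply_apply]
          rw [Finset.sum_boole]
          rw [st14_card_lt N I hIleN]
        rw [e1, e2]
        omega
      exact_mod_cast key
    · -- value equals the target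
      rw [← Equiv.sum_comp σ (fun i => |x i - ((((⌊x i⌋).toNat
            + (if ((σ.symm i : Fin N) : ℕ) < I then 1 else 0) : ℕ)) : ℝ)|)]
      have hterm : ∀ j : Fin N, |x (σ j) - ((((⌊x (σ j)⌋).toNat
            + (if ((σ.symm (σ j) : Fin N) : ℕ) < I then 1 else 0) : ℕ)) : ℝ)|
          = if (j : ℕ) < I then 1 - g j else g j := by
        intro j
        have hc : ((((⌊x (σ j)⌋).toNat
            + (if ((σ.symm (σ j) : Fin N) : ℕ) < I then 1 else 0) : ℕ)) : ℝ)
            = (⌊x (σ j)⌋ : ℝ) + (if (j : ℕ) < I then (1:ℝ) else 0) := by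
          simp only [Equiv.symm_apply_apply]
          have ht : ((⌊x (σ j)⌋.toNat : ℕ) : ℝ) = ((⌊x (σ j)⌋ : ℤ) : ℝ) := by
            exact_mod_cast congrArg (Int.cast : ℤ → ℝ) (Int.toNat_of_nonneg (hfloor (σ j)))
          push_cast
          rw [ht]
        rw [hc]
        by_cases hj : (j : ℕ) < I
        · simp only [hj, if_true]
          rw [abs_of_nonpos (by have := hg1 j; rw [hg] at this; linarith)]
          rw [hg]; ring
        · simp only [hj, if_false]
          rw [abs_of_nonneg (by have := hg0 j; rw [hg] at this; linarith)]
          rw [hg]; ring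
      rw [Finset.sum_congr rfl (fun j _ => hterm j)]
      rw [Finset.sum_ite, hfilter_not]
  · -- lower bound
    rintro v ⟨m, hm, rfl⟩
    set e : Fin N → ℤ := fun j => (m (σ j) : ℤ) - ⌊x (σ j)⌋ with he
    have hesum : ∑ j, e j = (I : ℤ) := by
      have h1 : ∑ j, e j = ∑ i, ((m i : ℤ) - ⌊x i⌋) :=
        Equiv.sum_comp σ (fun i => (m i : ℤ) - ⌊x i⌋)
      rw [h1, Finset.sum_sub_distrib]
      have h2 : ∑ i, (m i : ℤ) = (M : ℤ) := by exact_mod_cast congrArg (Nat.cast : ℕ → ℤ) hm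
      rw [h2]
      omega
    set S := Finset.univ.filter (fun j : Fin N => 1 ≤ e j) with hS
    set Sc := Finset.univ.filter (fun j : Fin N => ¬ 1 ≤ e j) with hSc
    set k := S.card with hk
    have hkN : k ≤ N := by simpa using Finset.card_le_card (Finset.subset_univ S)
    have habs : ∑ i, |x i - (m i : ℝ)| = ∑ j, |g j - ((e j : ℤ) : ℝ)| := by
      rw [← Equiv.sum_comp σ (fun i => |x i - (m i : ℝ)|)]
      apply Finset.sum_congr rfl
      intro j _
      rw [hg]
      congr 1
      push_cast [he]
      ring
    -- split the sum
    have hsplit : ∑ j, |g j - ((e j : ℤ) : ℝ)|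
        = ∑ j ∈ S, |g j - ((e j : ℤ) : ℝ)| + ∑ j ∈ Sc, |g j - ((e j : ℤ) : ℝ)| :=
      (Finset.sum_filter_add_sum_filter_not Finset.univ _ _).symm
    have hbound1 : ∑ j ∈ S, (((e j : ℤ) : ℝ) - g j) ≤ ∑ j ∈ S, |g j - ((e j : ℤ) : ℝ)| := by
      apply Finset.sum_le_sum; intro j _
      rw [abs_sub_comm]; exact le_abs_self _
    have hbound2 : ∑ j ∈ Sc, (g j - ((e j : ℤ) : ℝ)) ≤ ∑ j ∈ Sc, |g j - ((e j : ℤ) : ℝ)| :=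
      Finset.sum_le_sum (fun j _ => le_abs_self _)
    -- integer bookkeeping
    have hA : (0:ℤ) ≤ ∑ j ∈ S, (e j - 1) := by
      apply Finset.sum_nonneg; intro j hj
      have := (Finset.mem_filter.mp hj).2; omega
    have hB : (0:ℤ) ≤ ∑ j ∈ Sc, (-(e j)) := by
      apply Finset.sum_nonneg; intro j hj
      have := (Finset.mem_filter.mp hj).2; omega
    have hAB : (∑ j ∈ S, (e j - 1)) - (∑ j ∈ Sc, (-(e j))) = (I:ℤ) - k := by
      have h1 : ∑ j ∈ S, e j + ∑ j ∈ Sc, e j = (I:ℤ) := by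
        rw [Finset.sum_filter_add_sum_filter_not]; exact hesum
      have h2 : ∑ j ∈ S, (e j - 1) = ∑ j ∈ S, e j - (k : ℤ) := by
        rw [Finset.sum_sub_distrib]; simp [hk]
      have h3 : ∑ j ∈ Sc, (-(e j)) = - ∑ j ∈ Sc, e j := by
        rw [Finset.sum_neg_distrib]
      rw [h2, h3]
      omega
    have hZ1 : ((I:ℝ) - k) ≤ ∑ j ∈ S, (((e j : ℤ) : ℝ) - 1) + ∑ j ∈ Sc, (-((e j : ℤ) : ℝ)) := by
      have : (I:ℤ) - k ≤ (∑ j ∈ S, (e j - 1)) + (∑ j ∈ Sc, (-(e j))) := by omega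
      calc ((I:ℝ) - k) = (((I:ℤ) - k : ℤ) : ℝ) := by push_cast; ring
        _ ≤ (((∑ j ∈ S, (e j - 1)) + (∑ j ∈ Sc, (-(e j))) : ℤ) : ℝ) := by exact_mod_cast this
        _ = ∑ j ∈ S, (((e j : ℤ) : ℝ) - 1) + ∑ j ∈ Sc, (-((e j : ℤ) : ℝ)) := by push_cast; ring
    have hZ2 : ((k:ℝ) - I) ≤ ∑ j ∈ S, (((e j : ℤ) : ℝ) - 1) + ∑ j ∈ Sc, (-((e j : ℤ) : ℝ)) := by
      have : (k:ℤ) - I ≤ (∑ j ∈ S, (e j - 1)) + (∑ j ∈ Sc, (-(e j))) := by omega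
      calc ((k:ℝ) - I) = (((k:ℤ) - I : ℤ) : ℝ) := by push_cast; ring
        _ ≤ (((∑ j ∈ S, (e j - 1)) + (∑ j ∈ Sc, (-(e j))) : ℤ) : ℝ) := by exact_mod_cast this
        _ = ∑ j ∈ S, (((e j : ℤ) : ℝ) - 1) + ∑ j ∈ Sc, (-((e j : ℤ) : ℝ)) := by push_cast; ring
    -- key real sums
    set G : ℝ := ∑ j, g j with hG
    set AB : ℝ := ∑ j ∈ S, (((e j : ℤ) : ℝ) - 1) + ∑ j ∈ Sc, (-((e j : ℤ) : ℝ)) with hABdef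
    have hf2 : ∑ j ∈ S, (((e j : ℤ) : ℝ) - g j)
        = ∑ j ∈ S, (1 - 2 * g j) + ∑ j ∈ S, g j + ∑ j ∈ S, (((e j : ℤ) : ℝ) - 1) := by
      rw [← Finset.sum_add_distrib, ← Finset.sum_add_distrib]
      apply Finset.sum_congr rfl; intros; ring
    have hf3 : ∑ j ∈ Sc, (g j - ((e j : ℤ) : ℝ))
        = ∑ j ∈ Sc, g j + ∑ j ∈ Sc, (-((e j : ℤ) : ℝ)) := by
      rw [← Finset.sum_add_distrib]
      apply Finset.sum_congr rfl; intros; ring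
    have hf4 : ∑ j ∈ S, g j + ∑ j ∈ Sc, g j = G :=
      Finset.sum_filter_add_sum_filter_not Finset.univ _ _
    -- lemma A
    have hf5 : ∑ j ∈ Finset.univ.filter (fun j : Fin N => (j:ℕ) < k), (1 - 2 * g j)
        ≤ ∑ j ∈ S, (1 - 2 * g j) := by
      have := st14_sumA (fun j => 1 - 2 * g j)
        (fun i j hij => by have := hsort i j hij; linarith) S
      rw [← hk] at this
      exact this
    -- step: compare filter < I with filter < k
    have hf6 : ∑ j ∈ Finset.univ.filter (fun j : Fin N => (j:ℕ) < I), (1 - 2 * g j)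
        ≤ ∑ j ∈ Finset.univ.filter (fun j : Fin N => (j:ℕ) < k), (1 - 2 * g j) + AB := by
      rcases le_or_gt k I with hkI | hIk
      · -- k ≤ I
        have hD : ∑ j ∈ Finset.univ.filter (fun j : Fin N => (j:ℕ) < I), (1 - 2 * g j)
            = ∑ j ∈ Finset.univ.filter (fun j : Fin N => (j:ℕ) < k), (1 - 2 * g j)
              + ∑ j ∈ Finset.univ.filter (fun j : Fin N => k ≤ (j:ℕ) ∧ (j:ℕ) < I),
                  (1 - 2 * g j) := by
          rw [← Finset.sum_filter_add_sum_filter_not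
            (Finset.univ.filter (fun j : Fin N => (j:ℕ) < I)) (fun j => (j:ℕ) < k)]
          congr 1
          · congr 1
            rw [Finset.filter_filter]
            apply Finset.filter_congr
            intro j _; simp; omega
          · congr 1
            rw [Finset.filter_filter]
            apply Finset.filter_congr
            intro j _; simp; omega
        have hcard : (Finset.univ.filter (fun j : Fin N => k ≤ (j:ℕ) ∧ (j:ℕ) < I)).card
            = I - k := st14_card_Ico N k I hIleN
        have hub : ∑ j ∈ Finset.univ.filter (fun j : Fin N => k ≤ (j:ℕ) ∧ (j:ℕ) < I),
            (1 - 2 * g j) ≤ ((I:ℝ) - k) := by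
          calc ∑ j ∈ Finset.univ.filter (fun j : Fin N => k ≤ (j:ℕ) ∧ (j:ℕ) < I), (1 - 2 * g j)
              ≤ ∑ _j ∈ Finset.univ.filter (fun j : Fin N => k ≤ (j:ℕ) ∧ (j:ℕ) < I), (1:ℝ) := by
                apply Finset.sum_le_sum; intro j _
                have := hg0 j; linarith
            _ = ((I - k : ℕ) : ℝ) := by rw [Finset.sum_const, hcard]; simp
            _ = ((I:ℝ) - k) := by
                have : ((I - k : ℕ) : ℝ) = (I:ℝ) - (k:ℝ) := by
                  rw [Nat.cast_sub hkI]
                rw [this]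
        rw [hD]
        linarith [hub, hZ1]
      · -- I < k
        have hD : ∑ j ∈ Finset.univ.filter (fun j : Fin N => (j:ℕ) < k), (1 - 2 * g j)
            = ∑ j ∈ Finset.univ.filter (fun j : Fin N => (j:ℕ) < I), (1 - 2 * g j)
              + ∑ j ∈ Finset.univ.filter (fun j : Fin N => I ≤ (j:ℕ) ∧ (j:ℕ) < k),
                  (1 - 2 * g j) := by
          rw [← Finset.sum_filter_add_sum_filter_not
            (Finset.univ.filter (fun j : Fin N => (j:ℕ) < k)) (fun j => (j:ℕ) < I)]
          congr 1
          · congr 1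
            rw [Finset.filter_filter]
            apply Finset.filter_congr
            intro j _; simp; omega
          · congr 1
            rw [Finset.filter_filter]
            apply Finset.filter_congr
            intro j _; simp; omega
        have hcard : (Finset.univ.filter (fun j : Fin N => I ≤ (j:ℕ) ∧ (j:ℕ) < k)).card
            = k - I := st14_card_Ico N I k hkN
        have hlb : (-((k:ℝ) - I)) ≤ ∑ j ∈ Finset.univ.filter
            (fun j : Fin N => I ≤ (j:ℕ) ∧ (j:ℕ) < k), (1 - 2 * g j) := by
          calc (-((k:ℝ) - I)) = ((k - I : ℕ) : ℝ) * (-1) := by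
                rw [Nat.cast_sub hIk.le]; ring
            _ = ∑ _j ∈ Finset.univ.filter (fun j : Fin N => I ≤ (j:ℕ) ∧ (j:ℕ) < k), (-1 : ℝ) := by
                rw [Finset.sum_const, hcard]; simp
            _ ≤ ∑ j ∈ Finset.univ.filter (fun j : Fin N => I ≤ (j:ℕ) ∧ (j:ℕ) < k),
                  (1 - 2 * g j) := by
                apply Finset.sum_le_sum; intro j _
                have := hg1 j; linarith
        linarith [hD, hlb, hZ2]
    -- target decomposition
    have hT : ∑ i ∈ Finset.univ.filter (fun i : Fin N => (i : ℕ) < I), (1 - g i)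
        + ∑ i ∈ Finset.univ.filter (fun i : Fin N => I ≤ (i : ℕ)), g i
        = G + ∑ j ∈ Finset.univ.filter (fun j : Fin N => (j:ℕ) < I), (1 - 2 * g j) := by
      have h1 : ∑ i ∈ Finset.univ.filter (fun i : Fin N => (i : ℕ) < I), (1 - g i)
          = ∑ j ∈ Finset.univ.filter (fun j : Fin N => (j:ℕ) < I), (1 - 2 * g j)
            + ∑ j ∈ Finset.univ.filter (fun j : Fin N => (j:ℕ) < I), g j := by
        rw [← Finset.sum_add_distrib]
        apply Finset.sum_congr rfl; intros; ring
      have h2 : ∑ j ∈ Finset.univ.filter (fun j : Fin N => (j:ℕ) < I), g j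
          + ∑ i ∈ Finset.univ.filter (fun i : Fin N => I ≤ (i : ℕ)), g i = G := by
        rw [hfilter_not]
        exact Finset.sum_filter_add_sum_filter_not Finset.univ _ _
      linarith
    rw [habs, hsplit, hT]
    linarith
end

section
/- Let x be a positive real vector with integer sum M. If a, b are two feasible vectors (nonnegative integers summing to M with each component in {floor(x_i), ceil(x_i)}) that both minimize ∑ |x_i - m_i|^q for some q ≥ 1, then for every r ≥ 1, ∑ |x_i - a_i|^r = ∑ |x_i - b_i|^r; i.e., the ORIC-type minimizers are simultaneously optimal for all L^r norms. -/
lemma key_inj (q : ℝ) (hq : 1 ≤ q) {u v : ℝ} (hu0 : 0 ≤ u) (hu1 : u ≤ 1)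
    (hv0 : 0 ≤ v) (hv1 : v ≤ 1)
    (h : u ^ q + v ^ q = (1 - u) ^ q + (1 - v) ^ q) : u = 1 - v := by
  have hq0 : (0:ℝ) < q := lt_of_lt_of_le one_pos hq
  have hsm : StrictMonoOn (fun t : ℝ => t ^ q - (1 - t) ^ q) (Set.Icc 0 1) := by
    intro s hs t ht hst
    have h1 : s ^ q < t ^ q := Real.rpow_lt_rpow hs.1 hst hq0
    have h2 : (1 - t) ^ q ≤ (1 - s) ^ q :=
      Real.rpow_le_rpow (by linarith [ht.2]) (by linarith) (le_of_lt hq0)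
    dsimp only
    linarith
  apply hsm.injOn (Set.mem_Icc.2 ⟨hu0, hu1⟩) (Set.mem_Icc.2 ⟨by linarith, by linarith⟩)
  dsimp only
  rw [sub_sub_cancel]
  linarith

lemma sum_swap2 {α : Type*} [AddCommMonoid α] {N : ℕ} (f g : Fin N → α) (i j : Fin N)
    (hij : i ≠ j) (h : ∀ k, k ≠ i → k ≠ j → f k = g k) :
    ∑ k, f k + (g i + g j) = ∑ k, g k + (f i + f j) := by
  classical
  have hs : ({i, j} : Finset (Fin N)) ⊆ Finset.univ := Finset.subset_univ _
  have A := Finset.sum_sdiff (f := f) hs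
  have B := Finset.sum_sdiff (f := g) hs
  have hpairf : ∑ k ∈ ({i,j} : Finset (Fin N)), f k = f i + f j := Finset.sum_pair hij
  have hpairg : ∑ k ∈ ({i,j} : Finset (Fin N)), g k = g i + g j := Finset.sum_pair hij
  have hrest : ∑ k ∈ Finset.univ \ {i,j}, f k = ∑ k ∈ Finset.univ \ {i,j}, g k :=
    Finset.sum_congr rfl (fun k hk => by
      simp only [Finset.mem_sdiff, Finset.mem_insert, Finset.mem_singleton] at hk
      exact h k (fun hh => hk.2 (Or.inl hh)) (fun hh => hk.2 (Or.inr hh)))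
  rw [← A, ← B, hpairf, hpairg, hrest]
  abel

theorem stmt15 (N : ℕ) (hN : 1 ≤ N) (x : Fin N → ℝ) (hx : ∀ i, 0 < x i)
    (M : ℕ) (hsum : ∑ i, x i = (M : ℝ)) (q : ℝ) (hq : 1 ≤ q)
    (a b : Fin N → ℕ)
    (ha : ∑ i, a i = M) (ha2 : ∀ i, (a i : ℤ) = ⌊x i⌋ ∨ (a i : ℤ) = ⌈x i⌉)
    (hb : ∑ i, b i = M) (hb2 : ∀ i, (b i : ℤ) = ⌊x i⌋ ∨ (b i : ℤ) = ⌈x i⌉)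
    (hamin : ∀ m : Fin N → ℕ, ∑ i, m i = M →
      (∀ i, (m i : ℤ) = ⌊x i⌋ ∨ (m i : ℤ) = ⌈x i⌉) →
      ∑ i, |x i - (a i : ℝ)| ^ q ≤ ∑ i, |x i - (m i : ℝ)| ^ q)
    (hbmin : ∀ m : Fin N → ℕ, ∑ i, m i = M →
      (∀ i, (m i : ℤ) = ⌊x i⌋ ∨ (m i : ℤ) = ⌈x i⌉) →
      ∑ i, |x i - (b i : ℝ)| ^ q ≤ ∑ i, |x i - (m i : ℝ)| ^ q) :
    ∀ r : ℝ, 1 ≤ r →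
      ∑ i, |x i - (a i : ℝ)| ^ r = ∑ i, |x i - (b i : ℝ)| ^ r := by
  intro r hr
  classical
  set P := Finset.univ.filter (fun i => b i < a i) with hPdef
  set Q := Finset.univ.filter (fun i => a i < b i) with hQdef
  have hmemP : ∀ i, i ∈ P ↔ b i < a i := by
    intro i; simp [hPdef]
  have hmemQ : ∀ i, i ∈ Q ↔ a i < b i := by
    intro i; simp [hQdef]
  -- basic integer facts
  have hab1 : ∀ i, (a i:ℤ) = (b i:ℤ) ∨ (a i:ℤ) = (b i:ℤ) + 1 ∨ (b i:ℤ) = (a i:ℤ) + 1 := by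
    intro i
    have h3 : (⌈x i⌉:ℤ) ≤ ⌊x i⌋ + 1 := Int.ceil_le_floor_add_one _
    have h4 : (⌊x i⌋:ℤ) ≤ ⌈x i⌉ := Int.floor_le_ceil _
    rcases ha2 i with h1 | h1 <;> rcases hb2 i with h2 | h2 <;> omega
  -- per-index facts when a and b differ
  have hmain : ∀ i, a i ≠ b i →
      |x i - (b i:ℝ)| = 1 - |x i - (a i:ℝ)| ∧ |x i - (a i:ℝ)| ≤ 1 := by
    intro i hne
    have hne' : (a i : ℤ) ≠ (b i : ℤ) := by exact_mod_cast fun h => hne (by exact_mod_cast h)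
    have h3 : (⌈x i⌉:ℤ) ≤ ⌊x i⌋ + 1 := Int.ceil_le_floor_add_one _
    have h4 : (⌊x i⌋:ℤ) ≤ ⌈x i⌉ := Int.floor_le_ceil _
    have hfl : (⌊x i⌋:ℝ) ≤ x i := Int.floor_le _
    have hcl : x i ≤ (⌈x i⌉:ℝ) := Int.le_ceil _
    rcases ha2 i with h1 | h1 <;> rcases hb2 i with h2 | h2
    · exact absurd (h1.trans h2.symm) hne'
    · -- a = floor, b = ceil
      have hc : (⌈x i⌉:ℤ) = ⌊x i⌋ + 1 := by omega
      have hax : (a i:ℝ) = (⌊x i⌋:ℝ) := by exact_mod_cast h1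
      have hbx : (b i:ℝ) = (⌊x i⌋:ℝ) + 1 := by exact_mod_cast h2.trans hc
      have hcl' : x i ≤ (⌊x i⌋:ℝ) + 1 := by
        have hcR : ((⌈x i⌉:ℤ):ℝ) = ((⌊x i⌋:ℤ):ℝ) + 1 := by exact_mod_cast hc
        linarith
      rw [abs_of_nonpos (by linarith), abs_of_nonneg (by linarith)]
      constructor <;> linarith
    · -- a = ceil, b = floor
      have hc : (⌈x i⌉:ℤ) = ⌊x i⌋ + 1 := by omega
      have hbx : (b i:ℝ) = (⌊x i⌋:ℝ) := by exact_mod_cast h2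
      have hax : (a i:ℝ) = (⌊x i⌋:ℝ) + 1 := by exact_mod_cast h1.trans hc
      have hcl' : x i ≤ (⌊x i⌋:ℝ) + 1 := by
        have hcR : ((⌈x i⌉:ℤ):ℝ) = ((⌊x i⌋:ℤ):ℝ) + 1 := by exact_mod_cast hc
        linarith
      rw [abs_of_nonneg (by linarith), abs_of_nonpos (by linarith)]
      constructor <;> linarith
    · exact absurd (h1.trans h2.symm) hne'
  -- cardinalities of P and Q are equal
  have hsz : ∑ i, ((a i:ℤ) - (b i:ℤ)) = 0 := by
    rw [Finset.sum_sub_distrib]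
    have h1 : ∑ i, ((a i:ℤ)) = (M:ℤ) := by exact_mod_cast ha
    have h2 : ∑ i, ((b i:ℤ)) = (M:ℤ) := by exact_mod_cast hb
    rw [h1, h2, sub_self]
  have hPQdisj : Disjoint P Q := by
    rw [Finset.disjoint_left]
    intro i hiP hiQ
    rw [hmemP] at hiP; rw [hmemQ] at hiQ; omega
  have hsz2 : ∑ i ∈ P ∪ Q, ((a i:ℤ) - (b i:ℤ)) = 0 := by
    rw [← hsz]
    exact Finset.sum_subset (Finset.subset_univ _) (fun i _ hi => by
      simp only [Finset.mem_union, hmemP, hmemQ] at hi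
      omega)
  have hsP : ∑ i ∈ P, ((a i:ℤ) - (b i:ℤ)) = (P.card : ℤ) := by
    have e : ∑ i ∈ P, ((a i:ℤ) - (b i:ℤ)) = ∑ _i ∈ P, (1:ℤ) :=
      Finset.sum_congr rfl (fun i hi => by
        rw [hmemP] at hi; have := hab1 i; omega)
    rw [e, Finset.sum_const, nsmul_eq_mul, mul_one]
  have hsQ : ∑ i ∈ Q, ((a i:ℤ) - (b i:ℤ)) = -(Q.card : ℤ) := by
    have e : ∑ i ∈ Q, ((a i:ℤ) - (b i:ℤ)) = ∑ _i ∈ Q, (-1:ℤ) :=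
      Finset.sum_congr rfl (fun i hi => by
        rw [hmemQ] at hi; have := hab1 i; omega)
    rw [e, Finset.sum_const, nsmul_eq_mul, mul_neg_one]
  have hcard : P.card = Q.card := by
    have := hsz2
    rw [Finset.sum_union hPQdisj, hsP, hsQ] at this
    omega
  -- the exchange argument
  have hswap : ∀ i ∈ P, ∀ j ∈ Q, |x i - (a i:ℝ)| = 1 - |x j - (a j:ℝ)| := by
    intro i hi j hj
    rw [hmemP] at hi; rw [hmemQ] at hj
    have hij : i ≠ j := fun h => by rw [h] at hi; omega
    have hai : a i = b i + 1 := by have := hab1 i; omega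
    have hbj : b j = a j + 1 := by have := hab1 j; omega
    -- first exchange: modify a
    set m : Fin N → ℕ := fun k => if k = i then b i else if k = j then b j else a k with hm
    have hmi : m i = b i := by simp [hm]
    have hmj : m j = b j := by
      have hji : ¬ (j = i) := fun h => hij h.symm
      simp [hm, hji]
    have hmk : ∀ k, k ≠ i → k ≠ j → m k = a k := fun k h1 h2 => by simp [hm, h1, h2]
    have hmsum : ∑ k, m k = M := by
      have := sum_swap2 m a i j hij hmk
      rw [hmi, hmj, ha] at this
      omega
    have hmfeas : ∀ k, (m k:ℤ) = ⌊x k⌋ ∨ (m k:ℤ) = ⌈x k⌉ := by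
      intro k
      by_cases h1 : k = i
      · subst h1; rw [hmi]; exact hb2 k
      · by_cases h2 : k = j
        · subst h2; rw [hmj]; exact hb2 k
        · rw [hmk k h1 h2]; exact ha2 k
    have hc1 := hamin m hmsum hmfeas
    have hcs := sum_swap2 (fun k => |x k - (m k:ℝ)| ^ q) (fun k => |x k - (a k:ℝ)| ^ q) i j hij
      (fun k h1 h2 => by rw [hmk k h1 h2])
    simp only [hmi, hmj] at hcs
    have hle1 : |x i - (a i:ℝ)| ^ q + |x j - (a j:ℝ)| ^ q
        ≤ |x i - (b i:ℝ)| ^ q + |x j - (b j:ℝ)| ^ q := by linarith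
    -- second exchange: modify b
    set m' : Fin N → ℕ := fun k => if k = i then a i else if k = j then a j else b k with hm'
    have hmi' : m' i = a i := by simp [hm']
    have hmj' : m' j = a j := by
      have hji : ¬ (j = i) := fun h => hij h.symm
      simp [hm', hji]
    have hmk' : ∀ k, k ≠ i → k ≠ j → m' k = b k := fun k h1 h2 => by simp [hm', h1, h2]
    have hmsum' : ∑ k, m' k = M := by
      have := sum_swap2 m' b i j hij hmk'
      rw [hmi', hmj', hb] at this
      omega
    have hmfeas' : ∀ k, (m' k:ℤ) = ⌊x k⌋ ∨ (m' k:ℤ) = ⌈x k⌉ := by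
      intro k
      by_cases h1 : k = i
      · subst h1; rw [hmi']; exact ha2 k
      · by_cases h2 : k = j
        · subst h2; rw [hmj']; exact ha2 k
        · rw [hmk' k h1 h2]; exact hb2 k
    have hc2 := hbmin m' hmsum' hmfeas'
    have hcs' := sum_swap2 (fun k => |x k - (m' k:ℝ)| ^ q) (fun k => |x k - (b k:ℝ)| ^ q) i j hij
      (fun k h1 h2 => by rw [hmk' k h1 h2])
    simp only [hmi', hmj'] at hcs'
    have hle2 : |x i - (b i:ℝ)| ^ q + |x j - (b j:ℝ)| ^ q
        ≤ |x i - (a i:ℝ)| ^ q + |x j - (a j:ℝ)| ^ q := by linarith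
    -- combine
    have hnei : a i ≠ b i := by omega
    have hnej : a j ≠ b j := by omega
    obtain ⟨hbi, hai1⟩ := hmain i hnei
    obtain ⟨hbj', haj1⟩ := hmain j hnej
    have heq : |x i - (a i:ℝ)| ^ q + |x j - (a j:ℝ)| ^ q
        = (1 - |x i - (a i:ℝ)|) ^ q + (1 - |x j - (a j:ℝ)|) ^ q := by
      rw [← hbi, ← hbj']; linarith
    exact key_inj q hq (abs_nonneg _) hai1 (abs_nonneg _) haj1 heq
  -- now finish
  by_cases hPne : P.Nonempty
  · obtain ⟨i0, hi0⟩ := hPne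
    have hQne : Q.Nonempty := by
      rw [← Finset.card_pos, ← hcard, Finset.card_pos]
      exact ⟨i0, hi0⟩
    obtain ⟨j0, hj0⟩ := hQne
    set d := |x i0 - (a i0:ℝ)| with hd
    have haP : ∀ i ∈ P, |x i - (a i:ℝ)| = d := by
      intro i hi
      rw [hswap i hi j0 hj0, ← hswap i0 hi0 j0 hj0]
    have haQ : ∀ j ∈ Q, |x j - (a j:ℝ)| = 1 - d := by
      intro j hj
      have := hswap i0 hi0 j hj
      linarith
    have hneP : ∀ i ∈ P, a i ≠ b i := by
      intro i hi; rw [hmemP] at hi; omega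
    have hneQ : ∀ j ∈ Q, a j ≠ b j := by
      intro j hj; rw [hmemQ] at hj; omega
    have hbP : ∀ i ∈ P, |x i - (b i:ℝ)| = 1 - d := by
      intro i hi
      rw [(hmain i (hneP i hi)).1, haP i hi]
    have hbQ : ∀ j ∈ Q, |x j - (b j:ℝ)| = d := by
      intro j hj
      rw [(hmain j (hneQ j hj)).1, haQ j hj]; ring
    have hkey : ∑ i, (|x i - (a i:ℝ)| ^ r - |x i - (b i:ℝ)| ^ r) = 0 := by
      have hzero : ∀ i ∈ Finset.univ, i ∉ P ∪ Q →
          |x i - (a i:ℝ)| ^ r - |x i - (b i:ℝ)| ^ r = 0 := by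
        intro i _ hi
        simp only [Finset.mem_union, hmemP, hmemQ] at hi
        have : a i = b i := by omega
        rw [this, sub_self]
      rw [← Finset.sum_subset (Finset.subset_univ (P ∪ Q)) hzero,
        Finset.sum_union hPQdisj]
      have e1 : ∑ i ∈ P, (|x i - (a i:ℝ)| ^ r - |x i - (b i:ℝ)| ^ r)
          = ∑ _i ∈ P, (d ^ r - (1 - d) ^ r) :=
        Finset.sum_congr rfl (fun i hi => by rw [haP i hi, hbP i hi])
      have e2 : ∑ j ∈ Q, (|x j - (a j:ℝ)| ^ r - |x j - (b j:ℝ)| ^ r)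
          = ∑ _j ∈ Q, ((1 - d) ^ r - d ^ r) :=
        Finset.sum_congr rfl (fun j hj => by rw [haQ j hj, hbQ j hj])
      rw [e1, e2, Finset.sum_const, Finset.sum_const, hcard, nsmul_eq_mul, nsmul_eq_mul]
      ring
    rw [Finset.sum_sub_distrib] at hkey
    linarith
  · -- P empty, hence Q empty, hence a = b
    have hQe : Q = ∅ := by
      rw [← Finset.card_eq_zero, ← hcard]
      rw [Finset.not_nonempty_iff_eq_empty] at hPne
      rw [hPne]; rfl
    rw [Finset.not_nonempty_iff_eq_empty] at hPne
    have hab : ∀ i, a i = b i := by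
      intro i
      by_contra hne
      rcases Nat.lt_or_ge (b i) (a i) with h | h
      · have : i ∈ P := (hmemP i).2 h
        rw [hPne] at this; exact absurd this (Finset.notMem_empty i)
      · have h' : a i < b i := by omega
        have : i ∈ Q := (hmemQ i).2 h'
        rw [hQe] at this; exact absurd this (Finset.notMem_empty i)
    exact Finset.sum_congr rfl (fun i _ => by rw [hab i])
end
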